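/- For any two disjoint subsets J, K ⊆ I, the cone σ_{J,K} is strongly convex (salient), i.e. σ_{J,K} ∩ (−σ_{J,K}) = {0}. -/
import Mathlib


open Matrix

/-- The `j`-th simple coroot `α^∨_j := Σ_i C_{ij} e_i`, i.e. the `j`-th column of `C`. -/
def acoroot {n : ℕ} (C : Matrix (Fin n) (Fin n) ℝ) (j : Fin n) : Fin n → ℝ :=
  fun i => C i j

/-- The cone `σ_{J,K}` of nonnegative linear combinations of the `-α^∨_j` (`j ∈ J`)
and the standard basis vectors `e_k` (`k ∈ K`). -/
def sigmaCone {n : ℕ} (C : Matrix (Fin n) (Fin n) ℝ) (J K : Finset (Fin n)) :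
    Set (Fin n → ℝ) :=
  {v | ∃ x y : Fin n → ℝ, (∀ j ∈ J, 0 ≤ x j) ∧ (∀ k ∈ K, 0 ≤ y k) ∧
    v = (∑ j ∈ J, x j • (-acoroot C j)) + ∑ k ∈ K, y k • (Pi.single k 1 : Fin n → ℝ)}

theorem stmt_1
    (n : ℕ) (hn : 1 ≤ n) (C : Matrix (Fin n) (Fin n) ℝ)
    (hdiag : ∀ i, C i i = 2)
    (hoff : ∀ i j, i ≠ j → C i j ≤ 0)
    (hprin : ∀ S : Finset (Fin n), S.Nonempty →
      IsUnit (C.submatrix (fun a : S => (a : Fin n)) (fun a : S => (a : Fin n))) ∧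
      ∀ i j : S,
        0 ≤ (C.submatrix (fun a : S => (a : Fin n)) (fun a : S => (a : Fin n)))⁻¹ i j)
    (J K : Finset (Fin n)) (hJK : Disjoint J K) :
    sigmaCone C J K ∩ (-sigmaCone C J K) = {0} := by
  ext v
  simp only [Set.mem_inter_iff, Set.mem_neg, Set.mem_singleton_iff]
  constructor
  · rintro ⟨⟨x, y, hx, hy, hv⟩, x', y', hx', hy', hv'⟩
    have hsum : ((∑ j ∈ J, x j • (-acoroot C j)) + ∑ k ∈ K, y k • (Pi.single k 1 : Fin n → ℝ))
        + ((∑ j ∈ J, x' j • (-acoroot C j)) + ∑ k ∈ K, y' k • (Pi.single k 1 : Fin n → ℝ)) = 0 := by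
      rw [← hv, ← hv']; exact add_neg_cancel v
    have hi : ∀ i, -(∑ j ∈ J, (x j + x' j) * C i j)
        + (∑ k ∈ K, (y k + y' k) * (if i = k then (1:ℝ) else 0)) = 0 := by
      intro i
      have := congrFun hsum i
      simp only [Pi.add_apply, Finset.sum_apply, Pi.smul_apply, Pi.neg_apply, smul_eq_mul,
        Pi.single_apply, acoroot, Pi.zero_apply] at this
      simp only [mul_neg] at this
      simp only [Finset.sum_neg_distrib] at this
      have e1 : ∑ j ∈ J, (x j + x' j) * C i j
          = ∑ j ∈ J, x j * C i j + ∑ j ∈ J, x' j * C i j := by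
        rw [← Finset.sum_add_distrib]; exact Finset.sum_congr rfl fun j _ => by ring
      have e2 : ∑ k ∈ K, (y k + y' k) * (if i = k then (1:ℝ) else 0)
          = (∑ k ∈ K, y k * (if i = k then (1:ℝ) else 0))
            + ∑ k ∈ K, y' k * (if i = k then (1:ℝ) else 0) := by
        rw [← Finset.sum_add_distrib]; exact Finset.sum_congr rfl fun k _ => by ring
      rw [e1, e2]; linarith [this]
    -- a_j := x j + x' j vanishes on J
    have haz : ∀ j ∈ J, x j + x' j = 0 := by
      intro j₀ hj₀
      have hJne : J.Nonempty := ⟨j₀, hj₀⟩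
      set M := C.submatrix (fun a : J => (a : Fin n)) (fun a : J => (a : Fin n)) with hM
      have hU := (hprin J hJne).1
      have hdet : IsUnit M.det := (Matrix.isUnit_iff_isUnit_det M).mp hU
      set f : J → ℝ := fun j => x j + x' j with hf
      have hMf : M.mulVec f = 0 := by
        funext i
        have hiJ : (∑ k ∈ K, (y k + y' k) * (if (i : Fin n) = k then (1:ℝ) else 0)) = 0 := by
          apply Finset.sum_eq_zero
          intro k hk
          have : (i : Fin n) ≠ k := fun h => (Finset.disjoint_left.mp hJK i.2) (h ▸ hk)
          simp [this]
        have := hi (i : Fin n)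
        rw [hiJ, add_zero, neg_eq_zero] at this
        have hrw : ∑ j ∈ J, (x j + x' j) * C (i : Fin n) j
            = ∑ j : J, (x j + x' j) * C (i : Fin n) j := by
          rw [← Finset.sum_attach J (fun j => (x j + x' j) * C (i : Fin n) j)]
          rfl
        simp only [Matrix.mulVec, dotProduct, Pi.zero_apply]
        rw [← this, hrw]
        apply Finset.sum_congr rfl
        intro j _
        simp [M, Matrix.submatrix_apply, f, mul_comm]
      have hf0 : f = 0 := by
        have := congrArg (fun w => M⁻¹.mulVec w) hMf
        simpa [Matrix.mulVec_mulVec, Matrix.nonsing_inv_mul M hdet] using this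
      exact congrFun hf0 ⟨j₀, hj₀⟩
    have hbz : ∀ k ∈ K, y k + y' k = 0 := by
      intro k hk
      have := hi k
      have h1 : ∑ j ∈ J, (x j + x' j) * C k j = 0 :=
        Finset.sum_eq_zero fun j hj => by rw [haz j hj, zero_mul]
      have h2 : (∑ k' ∈ K, (y k' + y' k') * (if k = k' then (1:ℝ) else 0)) = y k + y' k := by
        rw [Finset.sum_eq_single k]
        · simp
        · intro b hb hbk; simp [Ne.symm hbk]
        · intro h; exact absurd hk h
      rw [h1, h2, neg_zero, zero_add] at this
      exact this
    have hxz : ∀ j ∈ J, x j = 0 := fun j hj => by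
      have := haz j hj; have := hx j hj; have := hx' j hj; linarith
    have hyz : ∀ k ∈ K, y k = 0 := fun k hk => by
      have := hbz k hk; have := hy k hk; have := hy' k hk; linarith
    rw [hv]
    rw [Finset.sum_eq_zero fun j hj => by rw [hxz j hj, zero_smul],
        Finset.sum_eq_zero fun k hk => by rw [hyz k hk, zero_smul], add_zero]
  · rintro rfl
    refine ⟨⟨0, 0, by simp, by simp, by simp⟩, 0, 0, by simp, by simp, by simp⟩
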